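/- A quantum channel Φ on d×d matrices satisfies Φ† = Φ⁻¹ (adjoint with respect to the Hilbert–Schmidt inner product) if and only if there exists a unitary U with Φ(X) = U X U† for all X. -/

import Mathlib

open Matrix
open scoped ComplexOrder

/-- The algebra of `d × d` complex matrices. -/
abbrev Mat (d : ℕ) := Matrix (Fin d) (Fin d) ℂ

/-- A linear map on matrices is positive if it maps positive semidefinite matrices to
positive semidefinite matrices. -/
def IsPositiveMap {d : ℕ} (Φ : Module.End ℂ (Mat d)) : Prop :=
  ∀ X : Mat d, X.PosSemidef → (Φ X).PosSemidef

/-- A linear map on matrices is trace-preserving. -/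
def IsTracePreserving {d : ℕ} (Φ : Module.End ℂ (Mat d)) : Prop :=
  ∀ X : Mat d, (Φ X).trace = X.trace

/-- The block-wise application `(Φ ⊗ id_n)(X)` of `Φ` to a matrix on `ℂ^d ⊗ ℂ^n`. -/
def blockApply {d : ℕ} (Φ : Module.End ℂ (Mat d)) (n : ℕ)
    (X : Matrix (Fin d × Fin n) (Fin d × Fin n) ℂ) :
    Matrix (Fin d × Fin n) (Fin d × Fin n) ℂ :=
  Matrix.of fun p q => Φ (Matrix.of fun i j => X (i, p.2) (j, q.2)) p.1 q.1

/-- Complete positivity: `Φ ⊗ id_n` is positive for every `n`. -/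
def IsCompletelyPositive {d : ℕ} (Φ : Module.End ℂ (Mat d)) : Prop :=
  ∀ (n : ℕ) (X : Matrix (Fin d × Fin n) (Fin d × Fin n) ℂ),
    X.PosSemidef → (blockApply Φ n X).PosSemidef

/-- The attractor (peripheral) subspace: the span of eigenvectors corresponding to
eigenvalues of modulus one. -/
noncomputable def attrSubspace {d : ℕ} (Φ : Module.End ℂ (Mat d)) : Submodule ℂ (Mat d) :=
  ⨆ (μ : ℂ) (_ : ‖μ‖ = 1), Module.End.eigenspace Φ μ
/-! ### Auxiliary lemmas -/

lemma aux_trace_self_zero {d : ℕ} {C : Mat d} (h : (Cᴴ * C).trace = 0) : C = 0 := by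
  have h2 : ∑ j, ∑ i, Complex.normSq (C i j) = 0 := by
    have := h
    simp only [Matrix.trace, Matrix.diag, Matrix.mul_apply, Matrix.conjTranspose_apply] at this
    have : ((∑ j, ∑ i, (Complex.normSq (C i j) : ℂ))) = 0 := by
      rw [← this]; congr 1; ext j; congr 1; ext i
      rw [Complex.normSq_eq_conj_mul_self]; rfl
    exact_mod_cast this
  ext i j
  have hnn : ∀ p ∈ Finset.univ (α := Fin d), (0:ℝ) ≤ ∑ i, Complex.normSq (C i p) :=
    fun p _ => Finset.sum_nonneg fun i _ => Complex.normSq_nonneg _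
  have := (Finset.sum_eq_zero_iff_of_nonneg hnn).mp h2 j (Finset.mem_univ _)
  have := (Finset.sum_eq_zero_iff_of_nonneg
    (fun i _ => Complex.normSq_nonneg (C i j))).mp this i (Finset.mem_univ _)
  simpa using Complex.normSq_eq_zero.mp this

lemma aux_trace_forall_zero {d : ℕ} {C : Mat d}
    (h : ∀ B : Mat d, (Cᴴ * B).trace = 0) : C = 0 :=
  aux_trace_self_zero (h C)

def e2 (d : ℕ) : (Fin d ⊕ Fin d) ≃ (Fin d × Fin 2) where
  toFun := Sum.elim (fun i => (i, 0)) (fun i => (i, 1))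
  invFun := fun p => match p with | (i, 0) => Sum.inl i | (i, 1) => Sum.inr i
  left_inv := by rintro (i | i) <;> rfl
  right_inv := by rintro ⟨i, a⟩; fin_cases a <;> rfl

lemma aux_blockApply_fromBlocks {d : ℕ} (Φ : Module.End ℂ (Mat d)) (A B C D : Mat d) :
    blockApply Φ 2 ((fromBlocks A B C D).submatrix (e2 d).symm (e2 d).symm) =
      (fromBlocks (Φ A) (Φ B) (Φ C) (Φ D)).submatrix (e2 d).symm (e2 d).symm := by
  ext ⟨i, a⟩ ⟨j, b⟩
  fin_cases a <;> fin_cases b <;> simp [blockApply, e2, fromBlocks] <;> congr 1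

lemma aux_herm_and_KS {d : ℕ} {Φ : Module.End ℂ (Mat d)}
    (hCP : IsCompletelyPositive Φ) (hΦ1 : Φ 1 = 1) (X : Mat d) :
    Φ (Xᴴ) = (Φ X)ᴴ ∧ (Φ (Xᴴ * X) - (Φ X)ᴴ * Φ X).PosSemidef := by
  have hone : (1 : Mat d).PosDef := Matrix.PosDef.one
  haveI : Invertible (1 : Mat d) := invertibleOne
  have hM0 : (fromBlocks (Xᴴ * X) Xᴴ X (1 : Mat d)).PosSemidef := by
    have := (Matrix.PosDef.fromBlocks₂₂ (Xᴴ * X) Xᴴ hone (D := (1 : Mat d))).mpr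
    simp only [inv_one, Matrix.mul_one, conjTranspose_conjTranspose, sub_self] at this
    have h0 : (0 : Mat d).PosSemidef := Matrix.PosSemidef.zero
    have := this h0
    convert this using 2
  have hM : ((fromBlocks (Xᴴ * X) Xᴴ X (1 : Mat d)).submatrix
      (e2 d).symm (e2 d).symm).PosSemidef := hM0.submatrix _
  have hC := hCP 2 _ hM
  rw [aux_blockApply_fromBlocks] at hC
  have hF : (fromBlocks (Φ (Xᴴ * X)) (Φ Xᴴ) (Φ X) (Φ 1)).PosSemidef :=
    (Matrix.posSemidef_submatrix_equiv (e2 d).symm).mp hC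
  have hherm : Φ (Xᴴ) = (Φ X)ᴴ := by
    have h1 := hF.1
    rw [Matrix.IsHermitian, fromBlocks_conjTranspose] at h1
    have := congrArg Matrix.toBlocks₁₂ h1
    simpa [Matrix.toBlocks_fromBlocks₁₂] using this.symm
  refine ⟨hherm, ?_⟩
  rw [hΦ1, hherm] at hF
  have hF' : (fromBlocks (Φ (Xᴴ * X)) ((Φ X)ᴴ) (((Φ X)ᴴ)ᴴ) (1 : Mat d)).PosSemidef := by
    rwa [conjTranspose_conjTranspose]
  have := (Matrix.PosDef.fromBlocks₂₂ (Φ (Xᴴ * X)) ((Φ X)ᴴ) hone).mp hF'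
  simpa [inv_one, Matrix.mul_one] using this

lemma aux_rank_one_of_proj {d : ℕ} {P : Mat d} (hH : P.IsHermitian) (hi : P * P = P)
    (ht : P.trace = 1) :
    ∃ v : Fin d → ℂ, star v ⬝ᵥ v = 1 ∧ P = vecMulVec v (star v) := by
  set V : Mat d := (hH.eigenvectorUnitary : Mat d) with hVdef
  have hVmem := hH.eigenvectorUnitary.2
  have hsV : star V * V = 1 := (Matrix.mem_unitaryGroup_iff'.mp hVmem)
  have hVs : V * star V = 1 := (Matrix.mem_unitaryGroup_iff.mp hVmem)
  set f : Fin d → ℂ := RCLike.ofReal ∘ hH.eigenvalues with hfdef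
  have hP : P = V * diagonal f * star V := hH.spectral_theorem
  have hD : diagonal f = star V * P * V := (hH.conjStarAlgAut_star_eigenvectorUnitary).symm.trans
    (Unitary.conjStarAlgAut_star_apply _ _)
  have hDD : diagonal f * diagonal f = diagonal f := by
    rw [hD]
    calc star V * P * V * (star V * P * V) = star V * (P * (V * star V) * P) * V := by
          noncomm_ring
      _ = star V * P * V := by rw [hVs, Matrix.mul_one, hi]
  rw [diagonal_mul_diagonal] at hDD
  have hev : ∀ i, hH.eigenvalues i = 0 ∨ hH.eigenvalues i = 1 := by
    intro i
    have := congrFun (Matrix.diagonal_injective hDD) i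
    have : (hH.eigenvalues i : ℂ) * hH.eigenvalues i = hH.eigenvalues i := by
      simpa [hfdef] using this
    have hre : hH.eigenvalues i * hH.eigenvalues i = hH.eigenvalues i := by exact_mod_cast this
    have h0 : hH.eigenvalues i * (hH.eigenvalues i - 1) = 0 := by nlinarith
    rcases mul_eq_zero.mp h0 with h | h
    · exact Or.inl h
    · exact Or.inr (by linarith)
  have htr : ∑ i, hH.eigenvalues i = 1 := by
    have : P.trace = (V * diagonal f * star V).trace := by rw [← hP]
    rw [Matrix.trace_mul_cycle, hsV, Matrix.one_mul, Matrix.trace_diagonal] at this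
    rw [ht] at this
    have : ((∑ i, hH.eigenvalues i : ℝ) : ℂ) = 1 := by
      rw [Complex.ofReal_sum]; exact this.symm ▸ (by simp [hfdef])
    exact_mod_cast this
  have hcard : (Finset.univ.filter (fun i => hH.eigenvalues i = 1)).card = 1 := by
    have : ∑ i, hH.eigenvalues i
        = ∑ i ∈ Finset.univ.filter (fun i => hH.eigenvalues i = 1), (1 : ℝ) := by
      rw [Finset.sum_filter]
      refine Finset.sum_congr rfl fun i _ => ?_
      rcases hev i with h | h
      · simp [h]
      · simp [h]
    rw [this, Finset.sum_const] at htr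
    simp only [nsmul_eq_mul, mul_one] at htr
    exact_mod_cast htr
  obtain ⟨j, hj⟩ := Finset.card_eq_one.mp hcard
  have hfj : ∀ m, f m = if m = j then 1 else 0 := by
    intro m
    by_cases hm : m = j
    · subst hm
      have : m ∈ Finset.univ.filter (fun i => hH.eigenvalues i = 1) := by
        rw [hj]; exact Finset.mem_singleton_self m
      simp only [Finset.mem_filter] at this
      simp [hfdef, this.2]
    · have : m ∉ Finset.univ.filter (fun i => hH.eigenvalues i = 1) := by
        rw [hj]; simpa using hm
      simp only [Finset.mem_filter, Finset.mem_univ, true_and] at this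
      rcases hev m with h | h
      · simp [hfdef, hm, h]
      · exact absurd h this
  refine ⟨fun i => V i j, ?_, ?_⟩
  · have : (star V * V) j j = (1 : Mat d) j j := by rw [hsV]
    simpa [Matrix.mul_apply, dotProduct, Matrix.one_apply] using this
  · ext i k
    rw [hP]
    have expand : (V * diagonal f * star V) i k = ∑ m, V i m * f m * star (V k m) := by
      rw [Matrix.mul_apply]
      exact Finset.sum_congr rfl fun m _ => by rw [Matrix.mul_diagonal, Matrix.star_apply]
    rw [expand]
    have : ∀ m, V i m * f m * star (V k m) = if m = j then V i j * star (V k j) else 0 := by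
      intro m
      rw [hfj m]
      by_cases hm : m = j <;> simp [hm]
    rw [Finset.sum_congr rfl fun m _ => this m, Finset.sum_ite_eq' Finset.univ j]
    simp [vecMulVec_apply]

lemma aux_stdconj {d : ℕ} (i j : Fin d) :
    (single i j (1:ℂ))ᴴ = single j i (1:ℂ) := by
  ext a b
  simp [Matrix.conjTranspose_apply, Matrix.single, and_comm, apply_ite]

lemma aux_conj_vecMulVec {d : ℕ} (S T : Mat d) (v : Fin d → ℂ) :
    S * vecMulVec v (star v) * Tᴴ = vecMulVec (S *ᵥ v) (star (T *ᵥ v)) := by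
  ext k l
  simp only [Matrix.mul_apply, vecMulVec_apply, Matrix.conjTranspose_apply, mulVec,
    dotProduct, Pi.star_apply, star_sum, star_mul']
  rw [Finset.sum_mul_sum]
  rw [Finset.sum_congr rfl fun x _ => (Finset.sum_mul _ _ _ : _), Finset.sum_comm]
  exact Finset.sum_congr rfl fun i _ => Finset.sum_congr rfl fun j _ => by ring

lemma aux_mul_std_mul {d : ℕ} (U : Mat d) (a b : Fin d) :
    U * single a b (1:ℂ) * Uᴴ = vecMulVec (fun k => U k a) (star fun l => U l b) := by
  ext k l
  simp [Matrix.mul_apply, Matrix.single, vecMulVec_apply, Matrix.conjTranspose_apply,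
    ite_and, Finset.sum_ite_eq, Finset.mul_sum]

def Estd {d : ℕ} (a b : Fin d) : Mat d := single a b 1

lemma Estd_mul_same {d : ℕ} (a b c : Fin d) : Estd a b * Estd b c = Estd a c := by
  rw [Estd, Estd, Estd, Matrix.single_mul_single_same, mul_one]

lemma Estd_mul_ne {d : ℕ} {b b' : Fin d} (h : b ≠ b') (a c : Fin d) :
    Estd a b * Estd b' c = 0 := by
  rw [Estd, Estd]
  exact Matrix.single_mul_single_of_ne (c := (1:ℂ)) a b b' h (1:ℂ)

lemma Estd_conj {d : ℕ} (a b : Fin d) : (Estd a b)ᴴ = Estd b a := aux_stdconj a b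

lemma Estd_trace {d : ℕ} (a : Fin d) : (Estd a a).trace = 1 :=
  Matrix.trace_single_eq_same a (1:ℂ)

lemma Estd_decomp {d : ℕ} (X : Mat d) : X = ∑ a, ∑ b, X a b • Estd a b := by
  nth_rewrite 1 [matrix_eq_sum_single X]
  refine Finset.sum_congr rfl fun a _ => Finset.sum_congr rfl fun b _ => ?_
  rw [Estd, smul_single, smul_eq_mul, mul_one]

lemma aux_row_vecMulVec {d : ℕ} {v : Fin d → ℂ} (hv : star v ⬝ᵥ v = 1) :
    star v ᵥ* vecMulVec v (star v) = star v := by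
  have h1 : (∑ m, star (v m) * v m) = 1 := by simpa [dotProduct] using hv
  ext j
  simp only [vecMul, vecMulVec_apply, dotProduct, Pi.star_apply]
  calc ∑ m, star (v m) * (v m * star (v j))
      = (∑ m, star (v m) * v m) * star (v j) := by
        rw [Finset.sum_mul]; exact Finset.sum_congr rfl fun m _ => by ring
    _ = star (v j) := by rw [h1, one_mul]

/-- A quantum channel `Φ` satisfies `Φ† = Φ⁻¹` (adjoint with respect to
the Hilbert–Schmidt inner product) if and only if it is a unitary channel
`Φ(X) = U X U†`. -/
theorem adjoint_eq_inverse_iff_unitary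
    (d : ℕ) (Φ Ψ : Module.End ℂ (Mat d))
    (hCP : IsCompletelyPositive Φ) (hTP : IsTracePreserving Φ)
    (hadj : ∀ A B : Mat d, (Aᴴ * Φ B).trace = ((Ψ A)ᴴ * B).trace) :
    (Ψ ∘ₗ Φ = LinearMap.id ∧ Φ ∘ₗ Ψ = LinearMap.id) ↔
      ∃ U : Mat d, U * Uᴴ = 1 ∧ Uᴴ * U = 1 ∧ ∀ X : Mat d, Φ X = U * X * Uᴴ := by
  constructor
  · rintro ⟨hL, hR⟩
    have hLp : ∀ X, Ψ (Φ X) = X := fun X => congrArg (fun f => f X) (congrArg DFunLike.coe hL)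
    have hRp : ∀ X, Φ (Ψ X) = X := fun X => congrArg (fun f => f X) (congrArg DFunLike.coe hR)
    have hip : ∀ A B : Mat d, ((Φ A)ᴴ * Φ B).trace = (Aᴴ * B).trace := by
      intro A B
      rw [hadj (Φ A) B, hLp]
    have hΨ1 : Ψ 1 = 1 := by
      have h : ∀ B : Mat d, (((Ψ 1 : Mat d) - 1)ᴴ * B).trace = 0 := by
        intro B
        rw [conjTranspose_sub, Matrix.sub_mul, trace_sub]
        have h1 := hadj 1 B
        rw [conjTranspose_one, Matrix.one_mul, hTP] at h1
        rw [← h1, conjTranspose_one, Matrix.one_mul, sub_self]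
      have := aux_trace_forall_zero h
      linear_combination (norm := module) this
    have hΦ1 : Φ 1 = 1 := by
      calc Φ 1 = Φ (Ψ 1) := by rw [hΨ1]
        _ = 1 := hRp 1
    have hherm : ∀ X : Mat d, Φ (Xᴴ) = (Φ X)ᴴ := fun X => (aux_herm_and_KS hCP hΦ1 X).1
    have hmulstar : ∀ X : Mat d, Φ (Xᴴ * X) = (Φ X)ᴴ * Φ X := by
      intro X
      have hKS := (aux_herm_and_KS hCP hΦ1 X).2
      have htr0 : (Φ (Xᴴ * X) - (Φ X)ᴴ * Φ X).trace = 0 := by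
        rw [trace_sub, hTP, hip X X, sub_self]
      obtain ⟨B, hB⟩ : ∃ B : Mat d, _ = Bᴴ * B := by
        open scoped MatrixOrder Matrix.Norms.L2Operator in
        exact CStarAlgebra.nonneg_iff_eq_star_mul_self.mp hKS.nonneg
      rw [hB] at htr0
      rw [aux_trace_self_zero htr0] at hB
      simp only [Matrix.mul_zero, conjTranspose_zero, Matrix.zero_mul] at hB
      exact sub_eq_zero.mp hB
    -- polarization
    have hpol : ∀ A B : Mat d, Φ (Aᴴ * B) = (Φ A)ᴴ * Φ B := by
      have hgzero : ∀ X : Mat d, Φ (Xᴴ * X) - (Φ X)ᴴ * Φ X = 0 := fun X => by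
        rw [hmulstar X, sub_self]
      have hsym : ∀ A B : Mat d,
          (Φ (Aᴴ * B) - (Φ A)ᴴ * Φ B) + (Φ (Bᴴ * A) - (Φ B)ᴴ * Φ A) = 0 := by
        intro A B
        have h := hgzero (A + B)
        have hexp : Φ ((A + B)ᴴ * (A + B)) - (Φ (A + B))ᴴ * Φ (A + B)
            = ((Φ (Aᴴ * A) - (Φ A)ᴴ * Φ A) + (Φ (Bᴴ * B) - (Φ B)ᴴ * Φ B))
              + ((Φ (Aᴴ * B) - (Φ A)ᴴ * Φ B) + (Φ (Bᴴ * A) - (Φ B)ᴴ * Φ A)) := by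
          simp only [conjTranspose_add, Matrix.add_mul, Matrix.mul_add, map_add]
          abel
        rw [h, hgzero A, hgzero B] at hexp
        simpa using hexp.symm
      have hskew : ∀ A B : Mat d,
          Φ (Aᴴ * B) - (Φ A)ᴴ * Φ B = Φ (Bᴴ * A) - (Φ B)ᴴ * Φ A := by
        intro A B
        have h := hsym A (Complex.I • B)
        have h1 : Φ (Aᴴ * (Complex.I • B)) - (Φ A)ᴴ * Φ (Complex.I • B)
            = Complex.I • (Φ (Aᴴ * B) - (Φ A)ᴴ * Φ B) := by
          rw [mul_smul_comm, _root_.map_smul, _root_.map_smul, smul_sub, Matrix.mul_smul]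
        have h2 : Φ ((Complex.I • B)ᴴ * A) - (Φ (Complex.I • B))ᴴ * Φ A
            = -(Complex.I • (Φ (Bᴴ * A) - (Φ B)ᴴ * Φ A)) := by
          rw [conjTranspose_smul, Matrix.smul_mul, _root_.map_smul, _root_.map_smul,
            conjTranspose_smul, Matrix.smul_mul, ← smul_sub]
          rw [show (star Complex.I : ℂ) = -Complex.I from Complex.conj_I, neg_smul]
        rw [h1, h2] at h
        have h3 : Complex.I • ((Φ (Aᴴ * B) - (Φ A)ᴴ * Φ B)
            - (Φ (Bᴴ * A) - (Φ B)ᴴ * Φ A)) = 0 := by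
          rw [smul_sub]
          linear_combination (norm := module) h
        rcases smul_eq_zero.mp h3 with h4 | h4
        · exact absurd h4 Complex.I_ne_zero
        · exact sub_eq_zero.mp h4
      intro A B
      have h := hsym A B
      rw [hskew A B] at h
      have h2' : (2:ℂ) • (Φ (Bᴴ * A) - (Φ B)ᴴ * Φ A) = 0 := by
        linear_combination (norm := module) h
      have h0 : Φ (Bᴴ * A) - (Φ B)ᴴ * Φ A = 0 := by
        rcases smul_eq_zero.mp h2' with h4 | h4
        · exact absurd h4 two_ne_zero
        · exact h4
      exact sub_eq_zero.mp ((hskew A B).trans h0)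
    have hmul : ∀ A B : Mat d, Φ (A * B) = Φ A * Φ B := by
      intro A B
      have h := hpol Aᴴ B
      rw [conjTranspose_conjTranspose, hherm] at h
      rwa [conjTranspose_conjTranspose] at h
    rcases Nat.eq_zero_or_pos d with hd | hd
    · subst hd
      exact ⟨1, by ext i j; exact i.elim0, by ext i j; exact i.elim0,
        fun X => by ext i j; exact i.elim0⟩
    have i₀ : Fin d := ⟨0, hd⟩
    have hPi : Φ (Estd i₀ i₀) * Φ (Estd i₀ i₀) = Φ (Estd i₀ i₀) := by
      rw [← hmul, Estd_mul_same]
    have hPH : (Φ (Estd i₀ i₀)).IsHermitian := by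
      rw [Matrix.IsHermitian, ← hherm, Estd_conj]
    have hPt : (Φ (Estd i₀ i₀)).trace = 1 := by rw [hTP, Estd_trace]
    obtain ⟨v, hv, hPv⟩ := aux_rank_one_of_proj hPH hPi hPt
    set u : Fin d → Fin d → ℂ := fun a => Φ (Estd a i₀) *ᵥ v with hu
    set U : Mat d := Matrix.of (fun k a => u a k) with hUdef
    have hSconj : ∀ a, (Φ (Estd a i₀))ᴴ = Φ (Estd i₀ a) := by
      intro a
      rw [← hherm, Estd_conj]
    have hPhiE : ∀ a b, Φ (Estd a b) = vecMulVec (u a) (star (u b)) := by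
      intro a b
      have hEfac : Estd a b = Estd a i₀ * (Estd i₀ i₀ * Estd i₀ b) := by
        rw [Estd_mul_same, Estd_mul_same]
      rw [hEfac, hmul, hmul, ← hSconj b, ← Matrix.mul_assoc, hPv, aux_conj_vecMulVec]
    have hUdU : Uᴴ * U = 1 := by
      ext a b
      have hent : (Uᴴ * U) a b = (star (u a)) ⬝ᵥ (u b) := by
        simp [hUdef, Matrix.mul_apply, Matrix.conjTranspose_apply, dotProduct]
      rw [hent, hu]
      rw [star_mulVec, dotProduct_mulVec, vecMul_vecMul, hSconj a, ← hmul]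
      by_cases hab : a = b
      · subst hab
        rw [Estd_mul_same, hPv, aux_row_vecMulVec hv, hv, Matrix.one_apply_eq]
      · rw [Estd_mul_ne hab i₀ i₀, map_zero, Matrix.vecMul_zero,
          zero_dotProduct, Matrix.one_apply_ne hab]
    have hUUd : U * Uᴴ = 1 := mul_eq_one_comm.mp hUdU
    refine ⟨U, hUUd, hUdU, ?_⟩
    intro X
    have hUE : ∀ a b : Fin d, U * Estd a b * Uᴴ = Φ (Estd a b) := by
      intro a b
      rw [hPhiE, Estd, aux_mul_std_mul]
      rfl
    calc Φ X = Φ (∑ a, ∑ b, X a b • Estd a b) := by rw [← Estd_decomp X]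
      _ = ∑ a, ∑ b, X a b • Φ (Estd a b) := by simp only [map_sum, _root_.map_smul]
      _ = ∑ a, ∑ b, X a b • (U * Estd a b * Uᴴ) := by simp only [hUE]
      _ = U * (∑ a, ∑ b, X a b • Estd a b) * Uᴴ := by
          simp only [Matrix.mul_sum, Matrix.sum_mul, Matrix.mul_smul, Matrix.smul_mul]
      _ = U * X * Uᴴ := by rw [← Estd_decomp X]
  · rintro ⟨U, hUUd, hUdU, hU⟩
    have hΨeq : ∀ A : Mat d, Ψ A = Uᴴ * A * U := by
      intro A
      have h : ∀ B : Mat d, (((Ψ A : Mat d) - Uᴴ * A * U)ᴴ * B).trace = 0 := by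
        intro B
        rw [conjTranspose_sub, Matrix.sub_mul, trace_sub]
        have h1 := hadj A B
        rw [hU B] at h1
        have h2 : (Aᴴ * (U * B * Uᴴ)).trace = ((Uᴴ * A * U)ᴴ * B).trace := by
          have hct : (Uᴴ * A * U)ᴴ = Uᴴ * Aᴴ * U := by
            simp [conjTranspose_mul, Matrix.mul_assoc]
          rw [hct]
          calc (Aᴴ * (U * B * Uᴴ)).trace = ((Aᴴ * (U * B)) * Uᴴ).trace := by
                congr 1; noncomm_ring
            _ = (Uᴴ * (Aᴴ * (U * B))).trace := Matrix.trace_mul_comm _ _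
            _ = (Uᴴ * Aᴴ * U * B).trace := by congr 1; noncomm_ring
        rw [← h1, h2, sub_self]
      have := aux_trace_forall_zero h
      linear_combination (norm := module) this
    constructor
    · apply LinearMap.ext
      intro X
      simp only [LinearMap.comp_apply, LinearMap.id_apply]
      rw [hU X, hΨeq]
      simp only [← Matrix.mul_assoc]
      rw [hUdU, Matrix.one_mul, Matrix.mul_assoc, hUdU, Matrix.mul_one]
    · apply LinearMap.ext
      intro X
      simp only [LinearMap.comp_apply, LinearMap.id_apply]
      rw [hΨeq X, hU]
      simp only [← Matrix.mul_assoc]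
      rw [hUUd, Matrix.one_mul, Matrix.mul_assoc, hUUd, Matrix.mul_one]
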